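/- Let ψ be decreasing and positive on [n, 2n], and suppose ψ(t)ψ(2n−t) is decreasing on [1, n] with ψ(t)ψ(2n−t) ≥ ψ(n)² for t ∈ [1, n]. Then for any set γ of 2n integers, the sum ∑_{|k| ≤ n−1, k ∉ γ} ψ(|k|)ψ(2n − |k|) + ∑_{n ≤ |k| ≤ 2n, k ∉ γ} ψ(|k|)² (with ψ(0) := ψ(1)) is at least ψ(n)² + 2∑_{k=n+1}^{2n} ψ(k)² > ∑_{k=n}^{2n} ψ(k)². -/
import Mathlib

open Finset

theorem removed_terms_lower_bound (n : ℕ) (hn : 1 ≤ n) (ψ : ℕ → ℝ)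
    (hpos : ∀ k, 0 < ψ k) (hψ0 : ψ 0 = ψ 1)
    (hanti : ∀ j k, 1 ≤ j → j ≤ k → ψ k ≤ ψ j)
    (hprod : ∀ k ≤ n - 1, ψ k * ψ (2 * n - k) ≥ ψ n ^ 2)
    (γ : Finset ℤ) (hγ : γ.card = 2 * n) :
    (∑ k ∈ (Finset.Icc (-(2 * n : ℤ)) (2 * n)) \ γ,
        (if k.natAbs ≤ n - 1 then ψ k.natAbs * ψ (2 * n - k.natAbs) else ψ k.natAbs ^ 2))
      ≥ ψ n ^ 2 + 2 * ∑ k ∈ Finset.Icc (n + 1) (2 * n), ψ k ^ 2 ∧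
    ψ n ^ 2 + 2 * ∑ k ∈ Finset.Icc (n + 1) (2 * n), ψ k ^ 2 >
      ∑ k ∈ Finset.Icc n (2 * n), ψ k ^ 2 := by
  have hhalf2 : ψ n ^ 2 + 2 * ∑ k ∈ Finset.Icc (n + 1) (2 * n), ψ k ^ 2 >
      ∑ k ∈ Finset.Icc n (2 * n), ψ k ^ 2 := by
    have hins : Finset.Icc n (2 * n) = insert n (Finset.Icc (n + 1) (2 * n)) := by
      ext k; simp only [mem_Icc, mem_insert]; omega
    rw [hins, Finset.sum_insert (by simp only [mem_Icc]; omega)]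
    have hposum : 0 < ∑ k ∈ Finset.Icc (n + 1) (2 * n), ψ k ^ 2 :=
      Finset.sum_pos (fun i _ => pow_pos (hpos i) 2)
        (Finset.nonempty_Icc.mpr (by omega))
    linarith
  refine ⟨?_, hhalf2⟩
  set S : Finset ℤ := Finset.Icc (-(2 * n : ℤ)) (2 * n) with hS
  set T : Finset ℤ := S \ γ with hT
  set d : ℕ → ℝ := fun i => ψ i ^ 2 - ψ (i + 1) ^ 2 with hd
  have hd0 : ∀ i, 1 ≤ i → 0 ≤ d i := by
    intro i hi
    have h1 := hanti i (i + 1) hi (Nat.le_succ i)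
    have h2 := hpos (i + 1)
    simp only [hd]
    nlinarith
  -- telescoping
  have tele : ∀ m, n ≤ m → m ≤ 2 * n →
      ψ m ^ 2 = ψ (2 * n) ^ 2 + ∑ i ∈ Finset.Ico m (2 * n), d i := by
    intro m hm1 hm2
    have h := Finset.sum_Ico_eq_sub (fun i => ψ (i + 1) ^ 2 - ψ i ^ 2) hm2
    rw [Finset.sum_range_sub (fun i => ψ i ^ 2), Finset.sum_range_sub (fun i => ψ i ^ 2)] at h
    have h2 : ∑ i ∈ Finset.Ico m (2 * n), d i
        = -(∑ i ∈ Finset.Ico m (2 * n), (ψ (i + 1) ^ 2 - ψ i ^ 2)) := by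
      rw [← Finset.sum_neg_distrib]
      exact Finset.sum_congr rfl (fun i _ => by simp only [hd]; ring)
    rw [h2, h]; ring
  have teleIf : ∀ m : ℕ, m ≤ 2 * n →
      ψ (max m n) ^ 2 = ψ (2 * n) ^ 2 +
        ∑ i ∈ Finset.Ico n (2 * n), (if m ≤ i then d i else 0) := by
    intro m hm
    have hfil : (Finset.Ico n (2 * n)).filter (fun i => m ≤ i)
        = Finset.Ico (max m n) (2 * n) := by
      ext i
      simp only [Finset.mem_filter, Finset.mem_Ico, le_max_iff, max_le_iff]
      omega
    rw [← Finset.sum_filter, hfil]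
    exact tele _ (le_max_right _ _) (max_le hm (by omega))
  have hTsub : ∀ k ∈ T, k.natAbs ≤ 2 * n := by
    intro k hk
    have h := (Finset.mem_sdiff.mp hk).1
    rw [hS, Finset.mem_Icc] at h
    omega
  -- pointwise lower bound
  have hfg : ∀ k ∈ T, ψ (max k.natAbs n) ^ 2 ≤
      (if k.natAbs ≤ n - 1 then ψ k.natAbs * ψ (2 * n - k.natAbs) else ψ k.natAbs ^ 2) := by
    intro k _
    by_cases h : k.natAbs ≤ n - 1
    · simp only [h, if_true]
      have h1 : max k.natAbs n = n := max_eq_right (by omega)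
      rw [h1]
      exact hprod _ h
    · simp only [h, if_false]
      have h1 : max k.natAbs n = k.natAbs := max_eq_left (by omega)
      rw [h1]
  -- expansion of the sum over T
  have hGsum : ∑ k ∈ T, ψ (max k.natAbs n) ^ 2
      = (T.card : ℝ) * ψ (2 * n) ^ 2 +
        ∑ i ∈ Finset.Ico n (2 * n),
          ((T.filter (fun k => k.natAbs ≤ i)).card : ℝ) * d i := by
    rw [Finset.sum_congr rfl (fun k hk => teleIf k.natAbs (hTsub k hk)),
      Finset.sum_add_distrib, Finset.sum_const, Finset.sum_comm]
    congr 1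
    · simp [nsmul_eq_mul]
    · refine Finset.sum_congr rfl (fun i _ => ?_)
      rw [← Finset.sum_filter, Finset.sum_const, nsmul_eq_mul]
  -- cardinality bounds
  have hScard : S.card = 4 * n + 1 := by
    rw [hS, Int.card_Icc]
    omega
  have hTcard : 2 * n + 1 ≤ T.card := by
    have h := Finset.card_le_card_sdiff_add_card (s := S) (t := γ)
    rw [← hT] at h
    omega
  have hFil : ∀ i, n ≤ i → i < 2 * n →
      2 * (i - n) + 1 ≤ (T.filter (fun k => k.natAbs ≤ i)).card := by
    intro i hi1 hi2
    have hsub : (Finset.Icc (-(i : ℤ)) i) \ γ ⊆ T.filter (fun k => k.natAbs ≤ i) := by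
      intro k hk
      rw [Finset.mem_sdiff, Finset.mem_Icc] at hk
      rw [Finset.mem_filter, hT, Finset.mem_sdiff, hS, Finset.mem_Icc]
      have hcast : (i : ℤ) ≤ 2 * n := by exact_mod_cast Nat.le_of_lt hi2
      refine ⟨⟨⟨by omega, by omega⟩, hk.2⟩, by omega⟩
    have hc1 := Finset.card_le_card hsub
    have hc2 := Finset.card_le_card_sdiff_add_card (s := Finset.Icc (-(i : ℤ)) i) (t := γ)
    have hc3 : (Finset.Icc (-(i : ℤ)) i).card = 2 * i + 1 := by
      rw [Int.card_Icc]; omega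
    omega
  -- expansion of the target
  have hRHS : ψ n ^ 2 + 2 * ∑ k ∈ Finset.Icc (n + 1) (2 * n), ψ k ^ 2
      = (2 * n + 1 : ℕ) * ψ (2 * n) ^ 2 +
        ∑ i ∈ Finset.Ico n (2 * n), ((2 * (i - n) + 1 : ℕ) : ℝ) * d i := by
    have h1 : ∀ k ∈ Finset.Icc (n + 1) (2 * n),
        ψ k ^ 2 = ψ (2 * n) ^ 2 +
          ∑ i ∈ Finset.Ico n (2 * n), (if k ≤ i then d i else 0) := by
      intro k hk
      rw [Finset.mem_Icc] at hk
      have := teleIf k hk.2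
      rwa [max_eq_left (by omega)] at this
    rw [tele n le_rfl (by omega), Finset.sum_congr rfl h1, Finset.sum_add_distrib,
      Finset.sum_const, Finset.sum_comm]
    have h2 : ∀ i ∈ Finset.Ico n (2 * n),
        ∑ k ∈ Finset.Icc (n + 1) (2 * n), (if k ≤ i then d i else 0)
          = ((i - n : ℕ) : ℝ) * d i := by
      intro i hi
      rw [Finset.mem_Ico] at hi
      rw [← Finset.sum_filter, Finset.sum_const, nsmul_eq_mul]
      congr 2
      have : (Finset.Icc (n + 1) (2 * n)).filter (fun k => k ≤ i) = Finset.Icc (n + 1) i := by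
        ext k; simp only [Finset.mem_filter, Finset.mem_Icc]; omega
      rw [this, Nat.card_Icc]
      omega
    rw [Finset.sum_congr rfl h2, Nat.card_Icc]
    have hcard : 2 * n + 1 - (n + 1) = n := by omega
    rw [hcard]
    have h3 : ∑ i ∈ Finset.Ico n (2 * n), ((2 * (i - n) + 1 : ℕ) : ℝ) * d i
        = ∑ i ∈ Finset.Ico n (2 * n), d i
          + 2 * ∑ i ∈ Finset.Ico n (2 * n), ((i - n : ℕ) : ℝ) * d i := by
      rw [Finset.mul_sum, ← Finset.sum_add_distrib]
      refine Finset.sum_congr rfl (fun i _ => ?_)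
      push_cast
      ring
    rw [h3, nsmul_eq_mul]
    push_cast
    ring
  -- combine
  calc ∑ k ∈ T, (if k.natAbs ≤ n - 1 then ψ k.natAbs * ψ (2 * n - k.natAbs) else ψ k.natAbs ^ 2)
      ≥ ∑ k ∈ T, ψ (max k.natAbs n) ^ 2 := Finset.sum_le_sum hfg
    _ = (T.card : ℝ) * ψ (2 * n) ^ 2 +
        ∑ i ∈ Finset.Ico n (2 * n),
          ((T.filter (fun k => k.natAbs ≤ i)).card : ℝ) * d i := hGsum
    _ ≥ (2 * n + 1 : ℕ) * ψ (2 * n) ^ 2 +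
        ∑ i ∈ Finset.Ico n (2 * n), ((2 * (i - n) + 1 : ℕ) : ℝ) * d i := by
        apply add_le_add
        · apply mul_le_mul_of_nonneg_right _ (sq_nonneg _)
          exact_mod_cast hTcard
        · apply Finset.sum_le_sum
          intro i hi
          rw [Finset.mem_Ico] at hi
          apply mul_le_mul_of_nonneg_right _ (hd0 i (by omega))
          exact_mod_cast hFil i hi.1 hi.2
    _ = ψ n ^ 2 + 2 * ∑ k ∈ Finset.Icc (n + 1) (2 * n), ψ k ^ 2 := hRHS.symm
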